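/- arXiv:1404.1306 — 2 statements merged into one kernel-verified Lean document; each statement's English description precedes it below -/
import Mathlib

section
/- The dimension of the affine subspace of R^((mk)^n) cut out by the normalization and no-signaling conditions on n-partite conditional probability distributions with m settings and k outcomes per party is (1 + m(k-1))^n - 1. -/
open Finset Function

namespace NSProof

variable (m k' : ℕ)

/-- One-site no-signaling-type submodule with values in a submodule `N`. -/
def nsSub {M : Type*} [AddCommGroup M] [Module ℝ M] (N : Submodule ℝ M) :
    Submodule ℝ ((Fin (k'+1) × Fin m) → M) where
  carrier := {h | (∀ p, h p ∈ N) ∧ ∀ x x' : Fin m, ∑ t, h (t, x) = ∑ t, h (t, x')}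
  add_mem' := by
    rintro a b ⟨ha1, ha2⟩ ⟨hb1, hb2⟩
    exact ⟨fun p => N.add_mem (ha1 p) (hb1 p), fun x x' => by
      simp only [Pi.add_apply, Finset.sum_add_distrib, ha2 x x', hb2 x x']⟩
  zero_mem' := ⟨fun p => N.zero_mem, fun x x' => by simp⟩
  smul_mem' := by
    rintro c a ⟨ha1, ha2⟩
    exact ⟨fun p => N.smul_mem c (ha1 p), fun x x' => by
      simp only [Pi.smul_apply, ← Finset.smul_sum, ha2 x x']⟩

variable {M : Type*} [AddCommGroup M] [Module ℝ M] (N : Submodule ℝ M)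

/-- backward map -/
def nsBwd (g : Option (Fin k' × Fin m) → N) : (Fin (k'+1) × Fin m) → M :=
  fun p => if ht : (p.1 : ℕ) < k' then (g (some (⟨p.1, ht⟩, p.2)) : M)
           else (g none : M) - ∑ t' : Fin k', (g (some (t', p.2)) : M)

lemma sum_nsBwd (g : Option (Fin k' × Fin m) → N) (x : Fin m) :
    ∑ t, nsBwd m k' N g (t, x) = (g none : M) := by
  rw [Fin.sum_univ_castSucc]
  have h1 : ∀ t : Fin k', nsBwd m k' N g (t.castSucc, x) = (g (some (t, x)) : M) := by
    intro t
    have hh : ((t.castSucc : Fin (k'+1)) : ℕ) < k' := t.isLt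
    have e : (⟨((t.castSucc : Fin (k'+1)) : ℕ), hh⟩ : Fin k') = t := Fin.ext rfl
    simp only [nsBwd, dif_pos hh, e]
  have h2 : nsBwd m k' N g (Fin.last k', x) =
      (g none : M) - ∑ t' : Fin k', (g (some (t', x)) : M) := by
    simp only [nsBwd, Fin.val_last, dif_neg (lt_irrefl k')]
  rw [h2, Finset.sum_congr rfl fun t _ => h1 t]
  abel

lemma nsBwd_mem (g : Option (Fin k' × Fin m) → N) : nsBwd m k' N g ∈ nsSub m k' N := by
  constructor
  · intro p
    by_cases ht : (p.1 : ℕ) < k'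
    · simp only [nsBwd, dif_pos ht]; exact (g _).2
    · simp only [nsBwd, dif_neg ht]
      exact N.sub_mem (g none).2 (N.sum_mem fun t _ => (g _).2)
  · intro x x'
    rw [sum_nsBwd, sum_nsBwd]

variable [NeZero m]

/-- forward map -/
def nsFwd (h : nsSub m k' N) (c : Option (Fin k' × Fin m)) : N :=
  c.elim ⟨∑ t, (h : (Fin (k'+1) × Fin m) → M) (t, (0 : Fin m)),
      Submodule.sum_mem _ fun t _ => h.2.1 (t, 0)⟩
    (fun q => ⟨(h : (Fin (k'+1) × Fin m) → M) (q.1.castSucc, q.2), h.2.1 _⟩)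

def nsEquiv : nsSub m k' N ≃ₗ[ℝ] (Option (Fin k' × Fin m) → N) where
  toFun := nsFwd m k' N
  map_add' h h' := by
    funext c
    match c with
    | none => exact Subtype.ext (by simp [nsFwd, Finset.sum_add_distrib])
    | some (t, x) => exact Subtype.ext (by simp [nsFwd])
  map_smul' c h := by
    funext d
    match d with
    | none => exact Subtype.ext (by simp [nsFwd, Finset.smul_sum])
    | some (t, x) => exact Subtype.ext (by simp [nsFwd])
  invFun g := ⟨nsBwd m k' N g, nsBwd_mem m k' N g⟩
  left_inv h := by
    apply Subtype.ext
    funext p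
    obtain ⟨t, x⟩ := p
    by_cases ht : (t : ℕ) < k'
    · have e : ((⟨(t : ℕ), ht⟩ : Fin k').castSucc) = t := Fin.ext rfl
      simp only [nsBwd, dif_pos ht, nsFwd, Option.elim, e]
    · have hlast : t = Fin.last k' :=
        Fin.ext (by simp only [Fin.val_last]; have := t.isLt; omega)
      subst hlast
      show nsBwd m k' N (nsFwd m k' N h) (Fin.last k', x) = _
      simp only [nsBwd, Fin.val_last, dif_neg (lt_irrefl k'), nsFwd, Option.elim]
      rw [h.2.2 0 x, Fin.sum_univ_castSucc]
      abel
  right_inv g := by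
    funext c
    match c with
    | none => exact Subtype.ext (sum_nsBwd m k' N g 0)
    | some (t, x) =>
      apply Subtype.ext
      have hh : ((t.castSucc : Fin (k'+1)) : ℕ) < k' := t.isLt
      have e : (⟨((t.castSucc : Fin (k'+1)) : ℕ), hh⟩ : Fin k') = t := Fin.ext rfl
      simp only [nsFwd, nsBwd, Option.elim, dif_pos hh, e]

lemma finrank_nsSub [FiniteDimensional ℝ M] :
    Module.finrank ℝ (nsSub m k' N) = (k' * m + 1) * Module.finrank ℝ N := by
  rw [(nsEquiv m k' N).finrank_eq, Module.finrank_pi_fintype ℝ]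
  rw [Finset.sum_const, Finset.card_univ, smul_eq_mul]
  congr 1
  simp [Fintype.card_option]

/-! ## the n-party no-signaling submodule -/

abbrev Dist (n : ℕ) := ((Fin n → Fin (k'+1)) × (Fin n → Fin m)) → ℝ

def NSp (n : ℕ) : Submodule ℝ (Dist m k' n) where
  carrier := {Q | ∀ (i : Fin n) (a : Fin n → Fin (k'+1)) (x x' : Fin n → Fin m),
      (∀ j, j ≠ i → x j = x' j) →
      ∑ t, Q (update a i t, x) = ∑ t, Q (update a i t, x')}
  add_mem' := by
    intro a b ha hb i aa x x' hx
    simp only [Pi.add_apply, Finset.sum_add_distrib, ha i aa x x' hx, hb i aa x x' hx]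
  zero_mem' := by intro i aa x x' hx; simp
  smul_mem' := by
    intro c a ha i aa x x' hx
    simp only [Pi.smul_apply, ← Finset.smul_sum, ha i aa x x' hx]

lemma mem_NSp {n : ℕ} {Q : Dist m k' n} :
    Q ∈ NSp m k' n ↔ ∀ (i : Fin n) (a : Fin n → Fin (k'+1)) (x x' : Fin n → Fin m),
      (∀ j, j ≠ i → x j = x' j) →
      ∑ t, Q (update a i t, x) = ∑ t, Q (update a i t, x') := Iff.rfl

noncomputable def splitEquiv (n : ℕ) :
    Dist m k' (n+1) ≃ₗ[ℝ] ((Fin (k'+1) × Fin m) → Dist m k' n) where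
  toFun Q := fun p q => Q (Fin.cons p.1 q.1, Fin.cons p.2 q.2)
  invFun h := fun q => h (q.1 0, q.2 0) (Fin.tail q.1, Fin.tail q.2)
  left_inv Q := funext fun q => by simp [Fin.cons_self_tail]
  right_inv h := funext fun p => funext fun q => by simp
  map_add' Q Q' := rfl
  map_smul' c Q := rfl

lemma update_zero_eq (n : ℕ) (a : Fin (n+1) → Fin (k'+1)) (t : Fin (k'+1)) :
    update a 0 t = Fin.cons t (Fin.tail a) := by
  ext j
  refine Fin.cases ?_ (fun l => ?_) j
  · simp
  · simp [update_of_ne (Fin.succ_ne_zero l), Fin.tail]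

lemma update_succ_eq (n : ℕ) (a : Fin (n+1) → Fin (k'+1)) (j : Fin n) (t : Fin (k'+1)) :
    update a j.succ t = Fin.cons (a 0) (update (Fin.tail a) j t) := by
  rw [Fin.cons_update, Fin.cons_self_tail]

@[simp] lemma splitEquiv_apply (n : ℕ) (Q : Dist m k' (n+1)) (p) (q) :
    splitEquiv m k' n Q p q = Q (Fin.cons p.1 q.1, Fin.cons p.2 q.2) := rfl

lemma mem_NSp_succ_iff (n : ℕ) (Q : Dist m k' (n+1)) :
    Q ∈ NSp m k' (n+1) ↔
      (∀ p, splitEquiv m k' n Q p ∈ NSp m k' n) ∧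
      ∀ x x' : Fin m, ∑ t, splitEquiv m k' n Q (t, x) = ∑ t, splitEquiv m k' n Q (t, x') := by
  constructor
  · intro hQ
    refine ⟨?_, ?_⟩
    · rintro ⟨s, y⟩ i a x x' hxx'
      have key := hQ i.succ (Fin.cons s a) (Fin.cons y x) (Fin.cons y x') ?_
      · simpa [← Fin.cons_update] using key
      · intro j hj
        rcases Fin.eq_zero_or_eq_succ j with rfl | ⟨l, rfl⟩
        · simp
        · have : l ≠ i := fun h => hj (by rw [h])
          simp [hxx' l this]
    · intro x₁ x₂
      funext q
      rw [Finset.sum_apply, Finset.sum_apply]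
      have key := hQ 0 (Fin.cons 0 q.1) (Fin.cons x₁ q.2) (Fin.cons x₂ q.2) ?_
      · simpa [Fin.update_cons_zero] using key
      · intro j hj
        rcases Fin.eq_zero_or_eq_succ j with rfl | ⟨l, rfl⟩
        · exact absurd rfl hj
        · simp
  · rintro ⟨h1, h2⟩ i
    refine Fin.cases ?_ (fun j => ?_) i <;> intro a X X' hXX'
    · have ht : Fin.tail X = Fin.tail X' := funext fun l => hXX' l.succ (Fin.succ_ne_zero l)
      have key := congrFun (h2 (X 0) (X' 0)) (Fin.tail a, Fin.tail X)
      rw [Finset.sum_apply, Finset.sum_apply] at key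
      simp only [splitEquiv_apply] at key
      rw [Fin.cons_self_tail] at key
      rw [ht, Fin.cons_self_tail] at key
      simp only [update_zero_eq]
      exact key
    · have hx0 : X 0 = X' 0 := hXX' 0 (Fin.succ_ne_zero j).symm
      have htail : ∀ l, l ≠ j → Fin.tail X l = Fin.tail X' l := fun l hl =>
        hXX' l.succ (fun h => hl (Fin.succ_injective _ h))
      have key := h1 (a 0, X 0) j (Fin.tail a) (Fin.tail X) (Fin.tail X') htail
      simp only [splitEquiv_apply] at key
      simp only [update_succ_eq]
      rw [← Fin.cons_self_tail X, ← Fin.cons_self_tail X']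
      rw [← hx0]
      exact key

lemma map_splitEquiv (n : ℕ) :
    (NSp m k' (n+1)).map ((splitEquiv m k' n : Dist m k' (n+1) ≃ₗ[ℝ] _) :
      Dist m k' (n+1) →ₗ[ℝ] ((Fin (k'+1) × Fin m) → Dist m k' n)) = nsSub m k' (NSp m k' n) := by
  ext h
  rw [Submodule.mem_map_equiv, mem_NSp_succ_iff]
  simp only [LinearEquiv.apply_symm_apply]
  exact Iff.rfl

lemma finrank_NSp [NeZero m] (n : ℕ) :
    Module.finrank ℝ (NSp m k' n) = (k' * m + 1) ^ n := by
  induction n with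
  | zero =>
    have htop : NSp m k' 0 = ⊤ := by
      rw [Submodule.eq_top_iff']
      intro Q i
      exact i.elim0
    rw [htop, finrank_top, Module.finrank_pi]
    simp
  | succ n ih =>
    rw [← LinearEquiv.finrank_map_eq (splitEquiv m k' n) (NSp m k' (n+1)),
      map_splitEquiv, finrank_nsSub, ih, pow_succ]
    ring


lemma one_step {n : ℕ} {Q : Dist m k' n} (hQ : Q ∈ NSp m k' n) (i : Fin n)
    (x : Fin n → Fin m) (y : Fin m) :
    ∑ a, Q (a, x) = ∑ a, Q (a, update x i y) := by
  have hxx : ∀ j, j ≠ i → x j = (update x i y) j := fun j hj => (update_of_ne hj y x).symm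
  have double : ∑ a : Fin n → Fin (k'+1), ∑ t, Q (update a i t, x)
      = ∑ a : Fin n → Fin (k'+1), ∑ t, Q (update a i t, update x i y) :=
    Finset.sum_congr rfl fun a _ => hQ i a x _ hxx
  have collapse : ∀ z : Fin n → Fin m,
      ∑ a : Fin n → Fin (k'+1), ∑ t, Q (update a i t, z)
        = ((k':ℝ)+1) * ∑ a, Q (a, z) := by
    intro z
    rw [← Finset.sum_product', Finset.univ_product_univ]
    have hbij : Function.Bijective (fun p : (Fin n → Fin (k'+1)) × Fin (k'+1) =>
        ((update p.1 i p.2, p.1 i) : (Fin n → Fin (k'+1)) × Fin (k'+1))) := by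
      rw [Function.bijective_iff_has_inverse]
      refine ⟨fun q => (update q.1 i q.2, q.1 i), fun p => ?_, fun q => ?_⟩
      · simp [Function.update_idem, update_self, Function.update_eq_self]
      · simp [Function.update_idem, update_self, Function.update_eq_self]
    have hre := Fintype.sum_bijective _ hbij
      (fun p : (Fin n → Fin (k'+1)) × Fin (k'+1) => Q (update p.1 i p.2, z))
      (fun q : (Fin n → Fin (k'+1)) × Fin (k'+1) => Q (q.1, z)) (fun p => rfl)
    rw [hre, ← Finset.univ_product_univ, Finset.sum_product]
    simp only [Finset.sum_const, Finset.card_univ, Fintype.card_fin, nsmul_eq_mul,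
      ← Finset.mul_sum]
    push_cast
    ring
  have := (collapse x).symm.trans (double.trans (collapse (update x i y)))
  have hne : ((k':ℝ)+1) ≠ 0 := by positivity
  exact mul_left_cancel₀ hne this

lemma totsum {n : ℕ} {Q : Dist m k' n} (hQ : Q ∈ NSp m k' n) (x x' : Fin n → Fin m) :
    ∑ a, Q (a, x) = ∑ a, Q (a, x') := by
  suffices H : ∀ s : Finset (Fin n), ∀ x x' : Fin n → Fin m,
      (∀ j ∉ s, x j = x' j) → ∑ a, Q (a, x) = ∑ a, Q (a, x') from
    H univ x x' (fun j hj => absurd (Finset.mem_univ j) hj)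
  intro s
  induction s using Finset.induction_on with
  | empty =>
    intro x x' h
    have : x = x' := funext fun j => h j (Finset.notMem_empty j)
    rw [this]
  | @insert i s hi ih =>
    intro x x' h
    rw [one_step m k' hQ i x (x' i)]
    apply ih
    intro j hj
    by_cases hji : j = i
    · subst hji; rw [update_self]
    · rw [update_of_ne hji]
      exact h j (by simp [Finset.mem_insert, hji, hj])

noncomputable def totals (n : ℕ) : Dist m k' n →ₗ[ℝ] ℝ where
  toFun Q := ∑ a, Q (a, fun _ => 0)
  map_add' Q Q' := by simp [Finset.sum_add_distrib]
  map_smul' c Q := by simp [Finset.mul_sum]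

set_option synthInstance.maxHeartbeats 1000000 in
lemma finrank_W (n : ℕ) :
    Module.finrank ℝ
      (NSp m k' n ⊓ LinearMap.ker (totals m k' n) : Submodule ℝ (Dist m k' n))
      = (k' * m + 1) ^ n - 1 := by
  set g := (totals m k' n).comp (NSp m k' n).subtype with hg
  have hker : LinearMap.ker g = Submodule.comap (NSp m k' n).subtype
      (NSp m k' n ⊓ LinearMap.ker (totals m k' n)) := by
    rw [hg, LinearMap.ker_comp, Submodule.comap_inf, Submodule.comap_subtype_self, top_inf_eq]
  have hone : (fun _ => (1:ℝ) : Dist m k' n) ∈ NSp m k' n := fun i a x x' h => rfl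
  have hval : g ⟨fun _ => 1, hone⟩ = (((k'+1)^n : ℕ) : ℝ) := by
    simp [hg, totals]
  have hrange : LinearMap.range g = ⊤ := by
    rw [eq_top_iff]
    rintro r -
    refine ⟨(r / (((k'+1)^n : ℕ) : ℝ)) • ⟨fun _ => 1, hone⟩, ?_⟩
    rw [map_smul, hval, smul_eq_mul]
    have : (((k'+1)^n : ℕ) : ℝ) ≠ 0 := by positivity
    field_simp
  have hrn := LinearMap.finrank_range_add_finrank_ker g
  rw [hrange, finrank_top, Module.finrank_self] at hrn
  have hequiv := Submodule.comapSubtypeEquivOfLe (inf_le_left :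
      NSp m k' n ⊓ LinearMap.ker (totals m k' n) ≤ NSp m k' n)
  have e1 : Module.finrank ℝ
      (NSp m k' n ⊓ LinearMap.ker (totals m k' n) : Submodule ℝ (Dist m k' n))
      = Module.finrank ℝ (LinearMap.ker g) := by
    rw [hker]
    exact (LinearEquiv.finrank_eq hequiv).symm
  rw [e1]
  rw [finrank_NSp] at hrn
  omega

end NSProof

open NSProof in
/-- The affine subspace of `ℝ^((mk)^n)` cut out by normalization and no-signaling for
`n`-partite conditional probability distributions with `m` settings and `k` outcomes
per party has dimension `(1 + m(k-1))^n - 1`. -/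
theorem stmt3 (n m k : ℕ) (hn : 0 < n) (hm : 0 < m) (hk : 0 < k) :
    Module.finrank ℝ
      (affineSpan ℝ {P : ((Fin n → Fin k) × (Fin n → Fin m)) → ℝ |
        (∀ x : Fin n → Fin m, ∑ a : Fin n → Fin k, P (a, x) = 1) ∧
        (∀ i : Fin n, ∀ a : Fin n → Fin k, ∀ x x' : Fin n → Fin m,
          (∀ j, j ≠ i → x j = x' j) →
          ∑ t : Fin k, P (Function.update a i t, x) =
            ∑ t : Fin k, P (Function.update a i t, x'))}).direction =
      (1 + m * (k - 1)) ^ n - 1 := by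
  obtain ⟨k', rfl⟩ : ∃ k'', k = k'' + 1 := ⟨k - 1, (Nat.succ_pred_eq_of_pos hk).symm⟩
  haveI : NeZero m := ⟨hm.ne'⟩
  set W : Submodule ℝ (Dist m k' n) := NSp m k' n ⊓ LinearMap.ker (totals m k' n) with hW
  set P₀ : Dist m k' n := fun _ => ((((k'+1)^n : ℕ) : ℝ))⁻¹ with hP₀
  have hcardne : ((((k'+1)^n : ℕ)) : ℝ) ≠ 0 := by positivity
  have hP₀sum : ∀ x : Fin n → Fin m, ∑ a : Fin n → Fin (k'+1), P₀ (a, x) = 1 := by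
    intro x
    rw [hP₀]
    rw [Finset.sum_const, Finset.card_univ]
    simp only [Fintype.card_fun, Fintype.card_fin, nsmul_eq_mul]
    exact mul_inv_cancel₀ hcardne
  have hP₀NS : P₀ ∈ NSp m k' n := fun i a x x' h => rfl
  have hSet : {P : ((Fin n → Fin (k'+1)) × (Fin n → Fin m)) → ℝ |
        (∀ x : Fin n → Fin m, ∑ a : Fin n → Fin (k'+1), P (a, x) = 1) ∧
        (∀ i : Fin n, ∀ a : Fin n → Fin (k'+1), ∀ x x' : Fin n → Fin m,
          (∀ j, j ≠ i → x j = x' j) →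
          ∑ t : Fin (k'+1), P (Function.update a i t, x) =
            ∑ t : Fin (k'+1), P (Function.update a i t, x'))}
      = (AffineSubspace.mk' P₀ W : Set (Dist m k' n)) := by
    ext P
    simp only [Set.mem_setOf_eq, SetLike.mem_coe, AffineSubspace.mem_mk',
      vsub_eq_sub, hW, Submodule.mem_inf, LinearMap.mem_ker]
    constructor
    · rintro ⟨hnorm, hns⟩
      have hPNS : P ∈ NSp m k' n := hns
      refine ⟨Submodule.sub_mem _ hPNS hP₀NS, ?_⟩
      have : totals m k' n (P - P₀) = ∑ a : Fin n → Fin (k'+1), (P - P₀) (a, fun _ => 0) := rfl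
      rw [this]
      simp only [Pi.sub_apply, Finset.sum_sub_distrib]
      rw [hnorm (fun _ => 0), hP₀sum (fun _ => 0)]
      ring
    · rintro ⟨hns', hker⟩
      have hPNS : P ∈ NSp m k' n := by
        have := Submodule.add_mem _ hns' hP₀NS
        rwa [sub_add_cancel] at this
      refine ⟨?_, hPNS⟩
      intro x
      have h1 : ∑ a : Fin n → Fin (k'+1), (P - P₀) (a, x)
          = ∑ a : Fin n → Fin (k'+1), (P - P₀) (a, fun _ => 0) := totsum m k' hns' x _
      have h2 : ∑ a : Fin n → Fin (k'+1), (P - P₀) (a, fun _ => 0) = 0 := hker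
      have h3 : ∑ a : Fin n → Fin (k'+1), (P - P₀) (a, x)
          = (∑ a : Fin n → Fin (k'+1), P (a, x)) - ∑ a : Fin n → Fin (k'+1), P₀ (a, x) := by
        simp [Finset.sum_sub_distrib]
      rw [h1, h2] at h3
      have := h3.symm
      rw [hP₀sum x] at this
      linarith
  rw [hSet, AffineSubspace.affineSpan_coe, AffineSubspace.direction_mk', hW, finrank_W]
  have harith : k' * m + 1 = 1 + m * ((k' + 1) - 1) := by
    simp [Nat.add_sub_cancel]; ring
  rw [harith]
end

section
/- Facet composition preserves saturation count: suppose there exist d₁ linearly independent points q_i in an affine subspace ω₁ saturating a supporting inequality B'(q) = β', plus one additional point r making {q_i} ∪ {r} a basis of the (d₁+1)-dimensional linear span of ω₁, and analogously d₂ points q'_j and r' for ω₂. Then among the tensor products {q_i ⊗ r'_j} ∪ {r_i ⊗ q'_j} (where r-indexed families include the extra points), one obtains d₁d₂ + d₁ + d₂ linearly independent points saturating the product inequality (B'(P_A) - β')(B''(P_B) - β'') evaluated at zero. -/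
open scoped TensorProduct
open scoped TensorProduct

lemma li_tmul {K M N : Type*} [Field K] [AddCommGroup M] [Module K M]
    [AddCommGroup N] [Module K N] {ι κ : Type*} {u : ι → M} {v : κ → N}
    (hu : LinearIndependent K u) (hv : LinearIndependent K v) :
    LinearIndependent K (fun ij : ι × κ => u ij.1 ⊗ₜ[K] v ij.2) := by
  have hb := ((Module.Basis.span hu).tensorProduct (Module.Basis.span hv)).linearIndependent
  have hmap := hb.map' (TensorProduct.mapIncl _ _)
    (LinearMap.ker_eq_bot.mpr (Module.Flat.tensorProduct_mapIncl_injective_of_right _ _))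
  convert hmap using 1
  funext ij
  obtain ⟨i, j⟩ := ij
  simp only [Function.comp_apply, Module.Basis.tensorProduct_apply, TensorProduct.mapIncl,
    TensorProduct.map_tmul, Submodule.coe_subtype, Module.Basis.span_apply]
  all_goals rfl


/-- Facet composition preserves saturation count: from `d₁` (resp. `d₂`) linearly
independent saturating points plus one extra point on each side, the tensor products
`q_i ⊗ q'_j`, `q_i ⊗ r'`, `r ⊗ q'_j` give `d₁d₂ + d₁ + d₂` linearly independent points
saturating the product inequality `(B' - β'w)(B'' - β''w') = 0`. -/
theorem stmt15 {p q : ℕ} (d₁ d₂ : ℕ)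
    (B' w : (Fin p → ℝ) →ₗ[ℝ] ℝ) (B'' w' : (Fin q → ℝ) →ₗ[ℝ] ℝ) (β' β'' : ℝ)
    (qv : Fin d₁ → (Fin p → ℝ)) (r : Fin p → ℝ)
    (qv' : Fin d₂ → (Fin q → ℝ)) (r' : Fin q → ℝ)
    (hind : LinearIndependent ℝ (Fin.snoc qv r : Fin (d₁ + 1) → (Fin p → ℝ)))
    (hind' : LinearIndependent ℝ (Fin.snoc qv' r' : Fin (d₂ + 1) → (Fin q → ℝ)))
    (hsat : ∀ i, B' (qv i) = β') (hw : ∀ i, w (qv i) = 1) (hwr : w r = 1)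
    (hsat' : ∀ j, B'' (qv' j) = β'') (hw' : ∀ j, w' (qv' j) = 1) (hwr' : w' r' = 1) :
    let C : TensorProduct ℝ (Fin p → ℝ) (Fin q → ℝ) →ₗ[ℝ] ℝ :=
      (LinearMap.mul' ℝ ℝ).comp (TensorProduct.map (B' - β' • w) (B'' - β'' • w'))
    let F : (Fin d₁ × Fin d₂) ⊕ Fin d₁ ⊕ Fin d₂ →
        TensorProduct ℝ (Fin p → ℝ) (Fin q → ℝ) :=
      fun idx => match idx with
        | Sum.inl (i, j) => qv i ⊗ₜ[ℝ] qv' j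
        | Sum.inr (Sum.inl i) => qv i ⊗ₜ[ℝ] r'
        | Sum.inr (Sum.inr j) => r ⊗ₜ[ℝ] qv' j
    LinearIndependent ℝ F ∧ ∀ idx, C (F idx) = 0 := by
  intro C F
  constructor
  · have hg := li_tmul hind hind'
    have he : Function.Injective
        (fun idx : (Fin d₁ × Fin d₂) ⊕ Fin d₁ ⊕ Fin d₂ =>
          (match idx with
            | Sum.inl (i, j) => (i.castSucc, j.castSucc)
            | Sum.inr (Sum.inl i) => (i.castSucc, Fin.last d₂)
            | Sum.inr (Sum.inr j) => (Fin.last d₁, j.castSucc) :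
            Fin (d₁ + 1) × Fin (d₂ + 1))) := by
      rintro (⟨i, j⟩ | i | j) (⟨i', j'⟩ | i' | j') h <;>
        simp only [Prod.mk.injEq] at h <;>
        first
          | (exfalso; exact (Fin.castSucc_lt_last _).ne (by tauto))
          | (exfalso; exact (Fin.castSucc_lt_last _).ne' (by tauto))
          | simp_all [Fin.castSucc_injective _ ]
    have := hg.comp _ he
    convert this using 1
    funext idx
    rcases idx with ⟨i, j⟩ | i | j <;>
      simp [F, Fin.snoc_castSucc, Fin.snoc_last]
    rfl
  · have h1 : (B' - β' • w) r = B' r - β' * w r := by simp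
    rintro (⟨i, j⟩ | i | j) <;>
      simp [C, F, LinearMap.mul'_apply, TensorProduct.map_tmul, LinearMap.sub_apply,
        LinearMap.smul_apply, hsat, hw, hwr, hsat', hw', hwr', smul_eq_mul]
end
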